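/- Let f₁, f₂, f₃, f₄ be differentiable functions on an open set U ⊆ ℝ³ (coordinates z₁, z₂, z₃), let k₁, …, k₄ be scalars, and let P ∈ ℂ[X₁, X₂, X₃, X₄] be a polynomial satisfying the Euler-type relation Σᵢ kᵢXᵢ·∂P/∂Xᵢ = w·P for some scalar w. Suppose P(f₁(z), …, f₄(z)) = 0 for all z ∈ U. Then at every point z ∈ U where the gradient vector (∂P/∂X₁(f(z)), …, ∂P/∂X₄(f(z))) is nonzero, the determinant of the 4×4 matrix with first row (k₁f₁, k₂f₂, k₃f₃, k₄f₄) and remaining rows (∂f₁/∂zⱼ, …, ∂f₄/∂zⱼ) for j = 1, 2, 3 vanishes. -/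

import Mathlib

open MvPolynomial

lemma hasFDerivAt_eval_comp {n : ℕ} (f : Fin n → (Fin 3 → ℝ) → ℂ) (z : Fin 3 → ℝ)
    (D : Fin n → (Fin 3 → ℝ) →L[ℝ] ℂ) (hf : ∀ i, HasFDerivAt (f i) (D i) z)
    (P : MvPolynomial (Fin n) ℂ) :
    HasFDerivAt (fun z => eval (fun i => f i z) P)
      (∑ i, eval (fun i => f i z) (pderiv i P) • D i) z := by
  induction P using MvPolynomial.induction_on with
  | C a =>
      have h0 : (∑ i, eval (fun i => f i z) (pderiv i (C a : MvPolynomial (Fin n) ℂ)) • D i)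
          = 0 := by ext y; simp
      rw [h0]
      simpa using hasFDerivAt_const a z
  | add p q hp hq =>
      refine HasFDerivAt.congr_fderiv (HasFDerivAt.congr_of_eventuallyEq (hp.add hq)
        (Filter.EventuallyEq.of_eq ?_)) (Eq.symm ?_)
      · ext y; simp
      · ext y
        simp [ContinuousLinearMap.sum_apply, add_mul, Finset.sum_add_distrib]
  | mul_X p i hp =>
      refine HasFDerivAt.congr_fderiv (HasFDerivAt.congr_of_eventuallyEq (hp.mul (hf i))
        (Filter.EventuallyEq.of_eq ?_)) (Eq.symm ?_)
      · ext y; simp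
      · ext y
        simp only [ContinuousLinearMap.sum_apply, ContinuousLinearMap.add_apply,
          ContinuousLinearMap.smul_apply, smul_eq_mul, pderiv_mul, pderiv_X,
          map_add, map_mul, eval_X, Pi.single_apply, add_mul, Finset.sum_add_distrib,
          Finset.mul_sum]
        have h2 : (∑ x : Fin n, eval (fun i => f i z) p *
            eval (fun i => f i z) (if i = x then (1:MvPolynomial (Fin n) ℂ) else 0) * D x y)
            = eval (fun i => f i z) p * D i y := by
          rw [Finset.sum_congr rfl (fun x _ => by
            rw [apply_ite (eval fun i => f i z), map_one, map_zero, mul_ite, mul_one, mul_zero,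
              ite_mul, zero_mul])]
          simp
        rw [h2, add_comm]
        congr 1
        apply Finset.sum_congr rfl
        intro j _
        ring

/-- Aoki–Ibukiyama, key direction of Proposition 2.3(ii): if `f₁, …, f₄` satisfy an
isobaric algebraic relation `P(f₁, …, f₄) = 0` (with Euler relation
`Σᵢ kᵢ Xᵢ ∂P/∂Xᵢ = w·P`), then the Rankin–Cohen bracket determinant vanishes at every
point where the gradient of `P` at `(f₁(z), …, f₄(z))` is nonzero. -/
theorem bracket_vanishes_of_algebraic_relation
    (U : Set (Fin 3 → ℝ)) (hU : IsOpen U)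
    (f : Fin 4 → (Fin 3 → ℝ) → ℂ) (k : Fin 4 → ℂ) (w : ℂ)
    (hdiff : ∀ i, DifferentiableOn ℝ (f i) U)
    (P : MvPolynomial (Fin 4) ℂ)
    (heuler : ∑ i : Fin 4, C (k i) * X i * pderiv i P = C w * P)
    (hrel : ∀ z ∈ U, eval (fun i => f i z) P = 0)
    (z : Fin 3 → ℝ) (hz : z ∈ U)
    (hgrad : ∃ i : Fin 4, eval (fun i => f i z) (pderiv i P) ≠ 0) :
    Matrix.det (Matrix.of
      (Fin.cons (fun c : Fin 4 => k c * f c z)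
        (fun (j : Fin 3) (c : Fin 4) => fderiv ℝ (f c) z (Pi.single j 1)))) = 0 := by
  set D : Fin 4 → (Fin 3 → ℝ) →L[ℝ] ℂ := fun i => fderiv ℝ (f i) z with hD
  have hf : ∀ i, HasFDerivAt (f i) (D i) z := fun i =>
    ((hdiff i).differentiableAt (hU.mem_nhds hz)).hasFDerivAt
  have hder := hasFDerivAt_eval_comp f z D hf P
  have hzero : HasFDerivAt (fun z => eval (fun i => f i z) P) (0 : (Fin 3 → ℝ) →L[ℝ] ℂ) z := by
    have heq : (fun z => eval (fun i => f i z) P) =ᶠ[nhds z] fun _ => 0 :=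
      Filter.eventuallyEq_of_mem (hU.mem_nhds hz) hrel
    exact (hasFDerivAt_const 0 z).congr_of_eventuallyEq heq
  have hsum : (∑ i, eval (fun i => f i z) (pderiv i P) • D i) = 0 := hder.unique hzero
  set g : Fin 4 → ℂ := fun i => eval (fun i => f i z) (pderiv i P) with hg
  have hgne : g ≠ 0 := by
    obtain ⟨i, hi⟩ := hgrad
    intro h
    exact hi (congrFun h i)
  set M : Matrix (Fin 4) (Fin 4) ℂ := Matrix.of
      (Fin.cons (fun c : Fin 4 => k c * f c z)
        (fun (j : Fin 3) (c : Fin 4) => fderiv ℝ (f c) z (Pi.single j 1))) with hM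
  have hmv : M.mulVec g = 0 := by
    funext r
    refine Fin.cases ?_ ?_ r
    · have he := congrArg (eval (fun i => f i z)) heuler
      simp only [map_sum, map_mul, eval_C, eval_X] at he
      rw [hrel z hz, mul_zero] at he
      simpa [Matrix.mulVec, dotProduct, hM, hg, mul_comm, mul_assoc] using he
    · intro j
      have h2 : (∑ i, eval (fun i => f i z) (pderiv i P) * D i (Pi.single j 1)) = 0 := by
        have := congrArg (fun (L : (Fin 3 → ℝ) →L[ℝ] ℂ) => L (Pi.single j 1)) hsum
        simpa [ContinuousLinearMap.sum_apply] using this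
      simpa [Matrix.mulVec, dotProduct, hM, hg, hD, mul_comm] using h2
  exact Matrix.exists_mulVec_eq_zero_iff.mp ⟨g, hgne, hmv⟩
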